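/- Let m ≥ 2 and let W be a chord word on m strands all of whose generators are of the form A(i,m) with 1 ≤ i ≤ m-1 (a one-block word). Then in the diagram represented by the chord word A(1,m)·W, the chord corresponding to the initial generator A(1,m) is a special chord: it crosses every other chord of the diagram, i.e. in the standard name read from A(1,m)·W the two occurrences of the label 1 interleave with the two occurrences of every other label. -/
import Mathlib


/-- A chord word on `m` strands: a list of generators `A(i,j)` recorded as pairs `(i,j)`
with `1 ≤ i < j ≤ m`. -/
def IsChordWord (m : ℕ) (W : List (ℕ × ℕ)) : Prop :=
  ∀ p ∈ W, 1 ≤ p.1 ∧ p.1 < p.2 ∧ p.2 ≤ m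

/-- The standard name read from a chord word `W` on `m` strands: concatenate, for each
strand `s = 1, …, m`, the increasing enumeration of the (1-based) indices `r` of the
generators of `W` having `s` as an endpoint. -/
def standardName (m : ℕ) (W : List (ℕ × ℕ)) : List ℕ :=
  (List.range m).flatMap fun s =>
    ((List.range W.length).filter
      (fun r => decide ((W.getD r (0, 0)).1 = s + 1 ∨ (W.getD r (0, 0)).2 = s + 1))).map
      (· + 1)

/-- `N` is a name of an `n`-diagram: a list of length `2n` over `{1, …, n}` in which
every label occurs exactly twice. -/
def IsName (n : ℕ) (N : List ℕ) : Prop :=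
  N.length = 2 * n ∧ ∀ r, 1 ≤ r → r ≤ n → N.count r = 2

/-- Two names represent the same `n`-diagram: one is obtained from the other by a cyclic
rotation followed by a relabeling (a bijection of `{1, …, n}` applied to all entries). -/
def SameDiagram (n : ℕ) (N M : List ℕ) : Prop :=
  ∃ (k : ℕ) (σ : Equiv.Perm ℕ),
    (∀ x, 1 ≤ x → x ≤ n → 1 ≤ σ x ∧ σ x ≤ n) ∧ M = (N.rotate k).map σ

/-- A chord word `W` on `m` strands is a braiding of the `n`-diagram named by `N` if the
standard name read from `W` is a name of that diagram. -/
def IsBraiding (n m : ℕ) (W : List (ℕ × ℕ)) (N : List ℕ) : Prop :=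
  IsChordWord m W ∧ SameDiagram n (standardName m W) N

/-- The braid index of the diagram named by `N`: the least number `m ≥ 1` of strands of
any braiding of the diagram. -/
noncomputable def braidIndex (n : ℕ) (N : List ℕ) : ℕ :=
  sInf {m | 1 ≤ m ∧ ∃ W, IsBraiding n m W N}

/-- The increasing list of the (0-based) positions at which `x` occurs in `N`. -/
def positionsOf (N : List ℕ) (x : ℕ) : List ℕ :=
  (List.range N.length).filter fun p => decide (N.getD p 0 = x)

/-- The canonical braiding of a name `N` of an `n`-diagram: the chord word
`A(i_1,j_1) ⋯ A(i_n,j_n)` on `2n` strands, where `i_r < j_r` are the two (1-based)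
positions at which the label `r` occurs in `N`. -/
def canonicalBraiding (n : ℕ) (N : List ℕ) : List (ℕ × ℕ) :=
  (List.range n).map fun r =>
    ((positionsOf N (r + 1)).getD 0 0 + 1, (positionsOf N (r + 1)).getD 1 0 + 1)

/-- Commutation move: interchange two adjacent generators with disjoint endpoint sets. -/
def CommMove (V W : List (ℕ × ℕ)) : Prop :=
  ∃ (U V' : List (ℕ × ℕ)) (i j k l : ℕ),
    i ≠ k ∧ i ≠ l ∧ j ≠ k ∧ j ≠ l ∧
    V = U ++ (i, j) :: (k, l) :: V' ∧ W = U ++ (k, l) :: (i, j) :: V'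

/-- Cyclic permutation move on `m` strands: replace `W'·A(i,j)` by `A(i+1,j+1)·W'` when
`j < m`, and `W'·A(i,m)` by `A(1,i+1)·W'`. -/
def CycMove (m : ℕ) (V W : List (ℕ × ℕ)) : Prop :=
  (∃ (U : List (ℕ × ℕ)) (i j : ℕ), j < m ∧ V = U ++ [(i, j)] ∧ W = (i + 1, j + 1) :: U) ∨
  (∃ (U : List (ℕ × ℕ)) (i : ℕ), V = U ++ [(i, m)] ∧ W = (1, i + 1) :: U)

/-- Stabilization move: replace the word `U·A(i,m)` on `m` strands by `U·A(i,m+1)` on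
`m+1` strands. Words are recorded together with their number of strands. -/
def StabMove (p q : ℕ × List (ℕ × ℕ)) : Prop :=
  ∃ (U : List (ℕ × ℕ)) (i m : ℕ),
    p = (m, U ++ [(i, m)]) ∧ q = (m + 1, U ++ [(i, m + 1)])

/-- A single move on chord-words-with-strand-count: a commutation move, a cyclic
permutation move (in either direction), or a stabilization move (in either direction). -/
def Move (p q : ℕ × List (ℕ × ℕ)) : Prop :=
  (p.1 = q.1 ∧ (CommMove p.2 q.2 ∨ CycMove p.1 p.2 q.2 ∨ CycMove p.1 q.2 p.2)) ∨
    StabMove p q ∨ StabMove q p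

/-- Two chord-words-with-strand-count are related by a finite sequence of commutation,
cyclic permutation and stabilization moves. -/
def MoveEquiv (p q : ℕ × List (ℕ × ℕ)) : Prop :=
  Relation.ReflTransGen Move p q

/-- A commutation or cyclic permutation move (in either direction) on `m` strands. -/
def CCMove (m : ℕ) (V W : List (ℕ × ℕ)) : Prop :=
  CommMove V W ∨ CycMove m V W ∨ CycMove m W V

/-- Related by a finite sequence of commutation and cyclic permutation moves. -/
def CCEquiv (m : ℕ) : List (ℕ × ℕ) → List (ℕ × ℕ) → Prop :=
  Relation.ReflTransGen (CCMove m)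

/-- Cyclic equivalence on `m` strands: related by a finite sequence of cyclic
permutation moves. -/
def CycEquiv (m : ℕ) : List (ℕ × ℕ) → List (ℕ × ℕ) → Prop :=
  Relation.ReflTransGen fun V W => CycMove m V W ∨ CycMove m W V

/-- Decrease by one every strand index greater than `j`. -/
def shiftGt (j : ℕ) (W : List (ℕ × ℕ)) : List (ℕ × ℕ) :=
  W.map fun p => ((if j < p.1 then p.1 - 1 else p.1), (if j < p.2 then p.2 - 1 else p.2))

/-- Decrease by one every strand index greater than or equal to `j`. -/
def shiftGe (j : ℕ) (W : List (ℕ × ℕ)) : List (ℕ × ℕ) :=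
  W.map fun p => ((if j ≤ p.1 then p.1 - 1 else p.1), (if j ≤ p.2 then p.2 - 1 else p.2))

/-- Decreasing stabilization: replace `U·A(i,j)·V` on `m` strands (where `i < j - 1`,
the strand index `j` does not occur in `U`, and `j - 1` does not occur in `V`) by
`U'·A(i,j-1)·V'` on `m - 1` strands, where `U'` is `U` with every index `> j` decreased
by one and `V'` is `V` with every index `≥ j` decreased by one. -/
def DecStab (p q : ℕ × List (ℕ × ℕ)) : Prop :=
  ∃ (U V : List (ℕ × ℕ)) (i j : ℕ),
    i + 1 < j ∧
    (∀ x ∈ U, x.1 ≠ j ∧ x.2 ≠ j) ∧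
    (∀ x ∈ V, x.1 ≠ j - 1 ∧ x.2 ≠ j - 1) ∧
    p.2 = U ++ (i, j) :: V ∧
    q = (p.1 - 1, shiftGt j U ++ (i, j - 1) :: shiftGe j V)

/-- The blow-up of a name `N` with weights `w`: both occurrences of each label `r` are
replaced by the same ordered block of `w r` distinct fresh labels. -/
def blowUp (w : ℕ → ℕ) (N : List ℕ) : List ℕ :=
  N.flatMap fun r => (List.range (w r)).map fun t => (∑ s ∈ Finset.Ico 1 r, w s) + t + 1

/-- The chord word obtained from `Wa` by repeating its `r`-th generator `w r` times
consecutively, in place. -/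
def powerWord (w : ℕ → ℕ) (Wa : List (ℕ × ℕ)) : List (ℕ × ℕ) :=
  (List.range Wa.length).flatMap fun r => List.replicate (w (r + 1)) (Wa.getD r (0, 0))

/-- The diagram named by `N` is amalgamated: no name of the diagram is (cyclically) of
the form `x y U x y V` with `x ≠ y`. -/
def Amalgamated (n : ℕ) (N : List ℕ) : Prop :=
  ¬∃ (x y : ℕ) (U V : List ℕ), x ≠ y ∧ SameDiagram n N (x :: y :: (U ++ x :: y :: V))

/-- The chords labeled `r` and `s` cross in the name `N`: their occurrences interleave
cyclically. -/
def Crosses (N : List ℕ) (r s : ℕ) : Prop :=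
  ∃ k, [r, s, r, s].Sublist (N.rotate k)

/-- If `W` is a one-block chord word on `m` strands (all generators of
the form `A(i,m)`), then in the diagram represented by `A(1,m)·W` the chord of the
initial generator `A(1,m)` (labeled `1`) crosses every other chord: in the standard name
of `A(1,m)·W` the two occurrences of `1` interleave with those of every other label. -/
theorem oneBlock_special_chord (m : ℕ) (hm : 2 ≤ m) (W : List (ℕ × ℕ))
    (hW : IsChordWord m ((1, m) :: W)) (hblock : ∀ p ∈ W, p.2 = m) :
    ∀ r, 2 ≤ r → r ≤ W.length + 1 →
      Crosses (standardName m ((1, m) :: W)) 1 r := by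
  intro r hr2 hrn
  obtain ⟨m', rfl⟩ : ∃ m', m = m' + 2 := ⟨m - 2, by omega⟩
  have hlen : 1 ≤ W.length := by omega
  refine ⟨0, ?_⟩
  rw [List.rotate_zero]
  set W' : List (ℕ × ℕ) := (1, m' + 2) :: W with hW'def
  set P : ℕ → ℕ → Bool := fun s t =>
    decide ((W'.getD t (0,0)).1 = s + 1 ∨ (W'.getD t (0,0)).2 = s + 1) with hPdef
  set f : ℕ → List ℕ := fun s => ((List.range W'.length).filter (P s)).map (· + 1) with hfdef
  have hname : standardName (m'+2) W' = (List.range (m'+2)).flatMap f := rfl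
  have hlenW' : W'.length = W.length + 1 := by simp [hW'def]
  -- the range over generator indices
  have hrange : List.range W'.length = 0 :: (List.range W.length).map Nat.succ := by
    rw [hlenW', List.range_succ_eq_map]
  -- membership of W elements
  have hmemW : ∀ k, k < W.length → W.getD k (0,0) ∈ W := by
    intro k hk
    rw [List.getD_eq_getElem _ _ hk]
    exact List.getElem_mem hk
  -- f 0 starts with 1
  have hP00 : P 0 0 = true := by simp [hPdef, hW'def]
  obtain ⟨A, hA⟩ : ∃ A, f 0 = 1 :: A := by
    refine ⟨(((List.range W.length).map Nat.succ).filter (P 0)).map (· + 1), ?_⟩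
    rw [hfdef]
    simp only [hrange, List.filter_cons_of_pos hP00, List.map_cons]
  -- last block: strand m'+2, i.e. s = m'+1
  have hfilt : List.filter (P (m'+1)) (List.range W'.length) = List.range W'.length := by
    rw [List.filter_eq_self]
    intro a ha
    rw [List.mem_range] at ha
    rcases a with _ | b
    · simp [hPdef, hW'def]
    · have hb : b < W.length := by omega
      have h2 := hblock _ (hmemW b hb)
      rw [List.getD_eq_getElem _ _ hb] at h2
      have hg : W'.getD (b+1) (0,0) = W[b] := by
        rw [hW'def, List.getD_cons_succ, List.getD_eq_getElem _ _ hb]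
      simp only [hPdef]
      rw [hg]
      exact decide_eq_true (Or.inr (by omega))
  have hlast : f (m'+1) = (List.range W'.length).map (· + 1) := by
    simp only [hfdef, hfilt]
  obtain ⟨L, hL, hrL⟩ : ∃ L, f (m'+1) = 1 :: L ∧ r ∈ L := by
    refine ⟨((List.range W.length).map Nat.succ).map (· + 1), ?_, ?_⟩
    · rw [hlast, hrange]; simp
    · simp only [List.map_map, List.mem_map, List.mem_range, Function.comp]
      exact ⟨r - 2, by omega, by omega⟩
  -- r occurs in one of the first m'+1 blocks
  have hrfirst : r ∈ (List.range (m'+1)).flatMap f := by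
    set p : ℕ × ℕ := W.getD (r-2) (0,0) with hp
    have hpW : p ∈ W := hmemW _ (by omega)
    obtain ⟨h1, h2, h3⟩ := hW p (List.mem_cons_of_mem _ hpW)
    rw [List.mem_flatMap]
    refine ⟨p.1 - 1, List.mem_range.mpr (by omega), ?_⟩
    rw [hfdef]
    simp only [List.mem_map, List.mem_filter, List.mem_range]
    refine ⟨r - 1, ⟨by omega, ?_⟩, by omega⟩
    have hgd : W'.getD (r-1) (0,0) = p := by
      have : r - 1 = (r - 2) + 1 := by omega
      rw [this, hW'def, List.getD_cons_succ]
    rw [hPdef]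
    simp only [hgd]
    exact decide_eq_true (Or.inl (by omega))
  -- assemble
  rw [hname, show m' + 2 = (m' + 1) + 1 from rfl, List.range_succ, List.flatMap_append,
    List.flatMap_singleton, hL]
  obtain ⟨B, hB1, hB2⟩ : ∃ B, (List.range (m'+1)).flatMap f = 1 :: B ∧ r ∈ B := by
    refine ⟨A ++ (List.map Nat.succ (List.range m')).flatMap f, ?_, ?_⟩
    · rw [List.range_succ_eq_map, List.flatMap_cons, hA, List.cons_append]
    · rw [List.range_succ_eq_map, List.flatMap_cons, hA, List.cons_append] at hrfirst
      rcases List.mem_cons.mp hrfirst with h | h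
      · omega
      · exact h
  rw [hB1, List.cons_append]
  refine List.Sublist.cons₂ 1 ?_
  have h4 : ([r] ++ (1 :: [r])).Sublist (B ++ (1 :: L)) :=
    List.Sublist.append (List.singleton_sublist.mpr hB2)
      (List.Sublist.cons₂ 1 (List.singleton_sublist.mpr hrL))
  simpa using h4
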